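/- Let λ = (d−2)/2 and let C_ℓ^{(d−1)/2} be the Gegenbauer polynomial of degree ℓ. There exist δ₀ > 0 and c > 0 depending only on d such that for all L ≥ 1, all 0 ≤ ℓ ≤ L, and all 0 < δ ≤ δ₀: ∫_0^{δ/(2(L+1))} C_ℓ^{(d−1)/2}(cos θ) · sin^{d−1}θ dθ ≥ c · C_ℓ^{(d−1)/2}(1) · (δ/L)^d. -/

import Mathlib

open MeasureTheory MvPolynomial
open scoped RealInnerProductSpace ENNReal

noncomputable section

abbrev Esp (d : ℕ) : Type := EuclideanSpace ℝ (Fin (d+1))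

abbrev Sph (d : ℕ) := Metric.sphere (0 : Esp d) 1

/-- The surface measure on the unit sphere `S^d`. -/
def sphMeasure (d : ℕ) : Measure (Sph d) := (volume : Measure (Esp d)).toSphere

/-- The Laplacian on polynomials in `d+1` variables. -/
def polyLap (d : ℕ) : MvPolynomial (Fin (d+1)) ℝ →ₗ[ℝ] MvPolynomial (Fin (d+1)) ℝ :=
  ∑ i : Fin (d+1), ((pderiv i).toLinearMap ∘ₗ (pderiv i).toLinearMap)

/-- Homogeneous harmonic polynomials of degree `ℓ` in `d+1` variables. -/
def harmHomog (d ℓ : ℕ) : Submodule ℝ (MvPolynomial (Fin (d+1)) ℝ) :=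
  homogeneousSubmodule (Fin (d+1)) ℝ ℓ ⊓ LinearMap.ker (polyLap d)

/-- Restriction of polynomials to the unit sphere, as a linear map. -/
def restrictSph (d : ℕ) : MvPolynomial (Fin (d+1)) ℝ →ₗ[ℝ] (Sph d → ℝ) where
  toFun P := fun x => eval (fun i => (x : Esp d) i) P
  map_add' P Q := by funext x; simp
  map_smul' r P := by funext x; simp [smul_eval]

/-- Spherical harmonics of degree `ℓ` on `S^d`. -/
def Hsp (d ℓ : ℕ) : Submodule ℝ (Sph d → ℝ) := (harmHomog d ℓ).map (restrictSph d)

/-- Spherical harmonics of degree at most `L` on `S^d`. -/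
def PiSp (d L : ℕ) : Submodule ℝ (Sph d → ℝ) := ⨆ ℓ : Fin (L+1), Hsp d ℓ

/-- Sums of homogeneous harmonic polynomials of degrees `≤ L` :
polynomial (harmonic-extension) model of `Π_L`. -/
def harmPolyLe (d L : ℕ) : Submodule ℝ (MvPolynomial (Fin (d+1)) ℝ) :=
  ⨆ ℓ : Fin (L+1), harmHomog d ℓ

/-- The north pole of `S^d`. -/
def north (d : ℕ) : Sph d :=
  ⟨EuclideanSpace.single 0 1, by
    simp [mem_sphere_zero_iff_norm, EuclideanSpace.norm_single]⟩

/-- The geodesic distance on `S^d`. -/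
def gdist (d : ℕ) (x y : Sph d) : ℝ := Real.arccos ⟪(x : Esp d), (y : Esp d)⟫

/-- The Gegenbauer polynomials `C_ℓ^ν`, as functions on `ℝ`, defined by the standard
three-term recurrence. -/
def gegen (ν : ℝ) : ℕ → ℝ → ℝ
  | 0 => fun _ => 1
  | 1 => fun x => 2 * ν * x
  | (n+2) => fun x =>
      (2 * ((n : ℝ) + 1 + ν) * x * gegen ν (n+1) x - ((n : ℝ) + 2 * ν) * gegen ν n x) /
        ((n : ℝ) + 2)

namespace Stmt19Aux

def acoef (ν : ℝ) : ℕ → ℝ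
  | 0 => 1
  | (j+1) => acoef ν j * (ν + j) / (j + 1)

lemma acoef_succ (ν : ℝ) (j : ℕ) :
    acoef ν (j+1) = acoef ν j * (ν + (j:ℝ)) / ((j:ℝ) + 1) := rfl

lemma acoef_nonneg {ν : ℝ} (hν : 0 ≤ ν) : ∀ j, 0 ≤ acoef ν j
  | 0 => by norm_num [acoef]
  | (j+1) => by
      have h := acoef_nonneg hν j
      have h2 : (0:ℝ) ≤ ν + j := by positivity
      rw [acoef_succ]
      positivity

lemma acoef_id (ν : ℝ) (n k : ℕ) (hk : k ≤ n + 2) :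
    ((n:ℝ) + 2) * (acoef ν k * acoef ν (n + 2 - k)) =
      ((n:ℝ) + 1 + ν) * ((if k ≤ n + 1 then acoef ν k * acoef ν (n + 1 - k) else 0)
        + (if 1 ≤ k then acoef ν (k-1) * acoef ν (n + 2 - k) else 0))
      - ((n:ℝ) + 2*ν) * (if 1 ≤ k ∧ k ≤ n + 1 then acoef ν (k-1) * acoef ν (n + 1 - k) else 0) := by
  rcases Nat.eq_zero_or_pos k with rfl | hk1
  · rw [if_pos (by omega), if_neg (by omega), if_neg (by simp)]
    simp only [Nat.sub_zero, add_zero, mul_zero, sub_zero]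
    rw [acoef_succ]
    push_cast
    have h2 : ((n:ℝ) + 1) + 1 ≠ 0 := by positivity
    field_simp
    ring
  rcases Nat.eq_or_lt_of_le hk with rfl | hk2
  · rw [if_neg (by omega), if_pos (by omega), if_neg (by omega)]
    have e1 : n + 2 - (n + 2) = 0 := by omega
    have e2 : n + 2 - 1 = n + 1 := by omega
    rw [e1, e2]
    show ((n:ℝ)+2) * (acoef ν (n+1+1) * acoef ν 0) = _
    rw [acoef_succ]
    simp only [acoef, mul_zero, sub_zero, zero_add, mul_one]
    push_cast
    have h2 : ((n:ℝ) + 1) + 1 ≠ 0 := by positivity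
    field_simp
    ring
  · obtain ⟨j, rfl⟩ : ∃ j, k = j + 1 := ⟨k-1, by omega⟩
    have hj : j ≤ n := by omega
    rw [if_pos (by omega), if_pos (by omega), if_pos ⟨by omega, by omega⟩]
    have e1 : n + 2 - (j+1) = (n - j) + 1 := by omega
    have e2 : n + 1 - (j+1) = n - j := by omega
    have e3 : j + 1 - 1 = j := by omega
    rw [e1, e2, e3, acoef_succ, acoef_succ]
    have hc : ((n - j : ℕ) : ℝ) = (n:ℝ) - j := by
      push_cast [Nat.cast_sub hj]; ring
    rw [hc]
    have hjn : (j:ℝ) ≤ (n:ℝ) := Nat.cast_le.mpr hj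
    have d1 : (j:ℝ) + 1 ≠ 0 := by positivity
    have d2 : (n:ℝ) - j + 1 ≠ 0 := by nlinarith
    field_simp
    ring

lemma gegen_key (ν : ℝ) (n : ℕ) (θ : ℝ) :
    ((n:ℝ) + 2) * (∑ k ∈ Finset.range (n+3), acoef ν k * acoef ν (n+2-k) *
        Real.cos (((n:ℝ) + 2 - 2*k) * θ)) =
      2 * ((n:ℝ)+1+ν) * Real.cos θ * (∑ k ∈ Finset.range (n+2), acoef ν k * acoef ν (n+1-k) *
        Real.cos (((n:ℝ) + 1 - 2*k) * θ))
      - ((n:ℝ) + 2*ν) * (∑ k ∈ Finset.range (n+1), acoef ν k * acoef ν (n-k) *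
        Real.cos (((n:ℝ) - 2*k) * θ)) := by
  have hA : (∑ k ∈ Finset.range (n+3),
        (if k ≤ n+1 then acoef ν k * acoef ν (n+1-k) else 0) * Real.cos (((n:ℝ)+2-2*k)*θ))
      = ∑ k ∈ Finset.range (n+2), acoef ν k * acoef ν (n+1-k) * Real.cos (((n:ℝ)+2-2*k)*θ) := by
    rw [Finset.sum_range_succ, if_neg (by omega : ¬ (n+2 ≤ n+1)), zero_mul, add_zero]
    exact Finset.sum_congr rfl fun k hk => by
      rw [if_pos (Nat.lt_succ_iff.mp (Finset.mem_range.mp hk))]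
  have hB : (∑ k ∈ Finset.range (n+3),
        (if 1 ≤ k then acoef ν (k-1) * acoef ν (n+2-k) else 0) * Real.cos (((n:ℝ)+2-2*k)*θ))
      = ∑ k ∈ Finset.range (n+2), acoef ν k * acoef ν (n+1-k) * Real.cos (((n:ℝ)-2*k)*θ) := by
    rw [Finset.sum_range_succ']
    rw [if_neg (by omega : ¬ (1 ≤ 0)), zero_mul, add_zero]
    refine Finset.sum_congr rfl fun i _ => ?_
    rw [if_pos (by omega : 1 ≤ i + 1)]
    have e1 : i + 1 - 1 = i := by omega
    have e2 : n + 2 - (i+1) = n + 1 - i := by omega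
    rw [e1, e2]
    congr 1
    push_cast
    ring
  have hC : (∑ k ∈ Finset.range (n+3),
        (if 1 ≤ k ∧ k ≤ n+1 then acoef ν (k-1) * acoef ν (n+1-k) else 0) * Real.cos (((n:ℝ)+2-2*k)*θ))
      = ∑ k ∈ Finset.range (n+1), acoef ν k * acoef ν (n-k) * Real.cos (((n:ℝ)-2*k)*θ) := by
    rw [Finset.sum_range_succ']
    rw [if_neg (by omega : ¬ (1 ≤ 0 ∧ 0 ≤ n+1)), zero_mul, add_zero]
    rw [Finset.sum_range_succ]
    rw [if_neg (by omega : ¬ (1 ≤ n+1+1 ∧ n+1+1 ≤ n+1)), zero_mul, add_zero]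
    refine Finset.sum_congr rfl fun i hi => ?_
    have hi' : i < n + 1 := Finset.mem_range.mp hi
    rw [if_pos ⟨by omega, by omega⟩]
    have e1 : i + 1 - 1 = i := by omega
    have e2 : n + 1 - (i+1) = n - i := by omega
    rw [e1, e2]
    congr 1
    push_cast
    ring
  have hsplit : 2 * ((n:ℝ)+1+ν) * Real.cos θ * (∑ k ∈ Finset.range (n+2),
        acoef ν k * acoef ν (n+1-k) * Real.cos (((n:ℝ)+1-2*k)*θ))
      = ((n:ℝ)+1+ν) * ((∑ k ∈ Finset.range (n+2), acoef ν k * acoef ν (n+1-k) *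
          Real.cos (((n:ℝ)+2-2*k)*θ))
        + (∑ k ∈ Finset.range (n+2), acoef ν k * acoef ν (n+1-k) *
          Real.cos (((n:ℝ)-2*k)*θ))) := by
    rw [Finset.mul_sum, ← Finset.sum_add_distrib, Finset.mul_sum]
    refine Finset.sum_congr rfl fun k _ => ?_
    have hcc := Real.cos_add_cos (((n:ℝ)+2-2*k)*θ) (((n:ℝ)-2*k)*θ)
    have h1 : ((((n:ℝ)+2-2*k)*θ + ((n:ℝ)-2*k)*θ))/2 = ((n:ℝ)+1-2*k)*θ := by ring
    have h2 : ((((n:ℝ)+2-2*k)*θ - ((n:ℝ)-2*k)*θ))/2 = θ := by ring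
    rw [h1, h2] at hcc
    linear_combination (-(acoef ν k * acoef ν (n+1-k) * ((n:ℝ)+1+ν))) * hcc
  rw [hsplit, ← hA, ← hB, ← hC, Finset.mul_sum, ← Finset.sum_add_distrib,
    Finset.mul_sum, Finset.mul_sum, ← Finset.sum_sub_distrib]
  refine Finset.sum_congr rfl fun k hk => ?_
  have hk' : k ≤ n + 2 := by have := Finset.mem_range.mp hk; omega
  have := acoef_id ν n k hk'
  linear_combination Real.cos (((n:ℝ)+2-2*k)*θ) * this

lemma gegen_cos (ν : ℝ) (ℓ : ℕ) (θ : ℝ) :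
    gegen ν ℓ (Real.cos θ) =
      ∑ k ∈ Finset.range (ℓ+1), acoef ν k * acoef ν (ℓ-k) * Real.cos (((ℓ:ℝ) - 2*k) * θ) := by
  induction ℓ using Nat.twoStepInduction generalizing θ with
  | zero => norm_num [gegen, acoef]
  | one =>
      rw [Finset.sum_range_succ, Finset.sum_range_one]
      show 2 * ν * Real.cos θ = _
      norm_num [acoef]
      try rw [show ((1:ℝ) - 2) * θ = -θ by ring, Real.cos_neg]
      ring
  | more n ih ih1 =>
      show (2 * ((n : ℝ) + 1 + ν) * Real.cos θ * gegen ν (n+1) (Real.cos θ)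
          - ((n : ℝ) + 2 * ν) * gegen ν n (Real.cos θ)) / ((n : ℝ) + 2) = _
      rw [ih1, ih]
      rw [div_eq_iff (by positivity : ((n:ℝ) + 2) ≠ 0)]
      have hkey := gegen_key ν n θ
      have e3 : n + 2 + 1 = n + 3 := by omega
      rw [e3]
      push_cast
      linarith [hkey]

lemma gegen_one (ν : ℝ) (ℓ : ℕ) :
    gegen ν ℓ 1 = ∑ k ∈ Finset.range (ℓ+1), acoef ν k * acoef ν (ℓ-k) := by
  have h := gegen_cos ν ℓ 0
  simpa using h

lemma gegen_one_nonneg {ν : ℝ} (hν : 0 ≤ ν) (ℓ : ℕ) : 0 ≤ gegen ν ℓ 1 := by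
  rw [gegen_one]
  exact Finset.sum_nonneg fun k _ => mul_nonneg (acoef_nonneg hν k) (acoef_nonneg hν _)

lemma gegen_lb {ν : ℝ} (hν : 0 ≤ ν) (ℓ : ℕ) {θ : ℝ} (hθ : 0 ≤ θ)
    (hsm : (ℓ:ℝ) * θ ≤ 1/2) :
    gegen ν ℓ 1 / 2 ≤ gegen ν ℓ (Real.cos θ) := by
  rw [gegen_cos, gegen_one, Finset.sum_div]
  refine Finset.sum_le_sum fun k hk => ?_
  have hb : 0 ≤ acoef ν k * acoef ν (ℓ-k) :=
    mul_nonneg (acoef_nonneg hν k) (acoef_nonneg hν _)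
  have hkℓ : (k:ℝ) ≤ (ℓ:ℝ) := by
    have := Finset.mem_range.mp hk
    exact_mod_cast Nat.lt_succ_iff.mp this
  have hk0 : (0:ℝ) ≤ (k:ℝ) := Nat.cast_nonneg k
  have hℓθ : 0 ≤ (ℓ:ℝ) * θ := mul_nonneg (Nat.cast_nonneg ℓ) hθ
  have habs : (((ℓ:ℝ) - 2*k) * θ)^2 ≤ ((ℓ:ℝ)*θ)^2 := by
    have h1 : -((ℓ:ℝ)*θ) ≤ ((ℓ:ℝ) - 2*k) * θ := by nlinarith
    have h2 : ((ℓ:ℝ) - 2*k) * θ ≤ (ℓ:ℝ)*θ := by nlinarith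
    nlinarith
  have hcos := Real.one_sub_sq_div_two_le_cos (x := ((ℓ:ℝ) - 2*k) * θ)
  have hq : ((ℓ:ℝ)*θ)^2 ≤ 1/4 := by nlinarith
  have : (1:ℝ)/2 ≤ Real.cos (((ℓ:ℝ) - 2*k) * θ) := by nlinarith
  calc acoef ν k * acoef ν (ℓ-k) / 2
      = acoef ν k * acoef ν (ℓ-k) * (1/2) := by ring
    _ ≤ acoef ν k * acoef ν (ℓ-k) * Real.cos (((ℓ:ℝ) - 2*k) * θ) :=
        mul_le_mul_of_nonneg_left this hb

end Stmt19Aux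

open Stmt19Aux

/-- There are `δ₀, c > 0` depending only on `d` such that for all `L ≥ 1`, `ℓ ≤ L` and
`0 < δ ≤ δ₀`:
`∫_0^{δ/(2(L+1))} C_ℓ^{(d−1)/2}(cos θ) sin^{d−1}θ dθ ≥ c · C_ℓ^{(d−1)/2}(1) · (δ/L)^d`. -/
theorem stmt19 (d : ℕ) (hd : 2 ≤ d) :
    ∃ δ₀ c : ℝ, 0 < δ₀ ∧ 0 < c ∧ ∀ L : ℕ, 1 ≤ L → ∀ ℓ : ℕ, ℓ ≤ L → ∀ δ : ℝ,
      0 < δ → δ ≤ δ₀ →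
      c * gegen (((d : ℝ) - 1) / 2) ℓ 1 * (δ / L) ^ d ≤
        ∫ θ in (0 : ℝ)..(δ / (2 * ((L : ℝ) + 1))),
          gegen (((d : ℝ) - 1) / 2) ℓ (Real.cos θ) * Real.sin θ ^ (d - 1) := by
  set ν : ℝ := ((d : ℝ) - 1) / 2 with hνdef
  have hd2 : (2:ℝ) ≤ (d:ℝ) := by exact_mod_cast hd
  have hν : 0 ≤ ν := by rw [hνdef]; linarith
  have hdpos : (0:ℝ) < (d:ℝ) := by linarith
  refine ⟨1, 1/(2^d * (d:ℝ) * 4^d), one_pos, by positivity, ?_⟩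
  intro L hL ℓ hℓ δ hδ hδ1
  set T : ℝ := δ / (2 * ((L : ℝ) + 1)) with hTdef
  have hL1 : (1:ℝ) ≤ (L:ℝ) := by exact_mod_cast hL
  have hT0 : 0 < T := by rw [hTdef]; positivity
  have hT4 : T ≤ 1/4 := by
    rw [hTdef, div_le_div_iff₀ (by positivity) (by norm_num)]
    nlinarith
  have g1nn : 0 ≤ gegen ν ℓ 1 := gegen_one_nonneg hν ℓ
  have hpt : ∀ x ∈ Set.Icc (0:ℝ) T,
      (gegen ν ℓ 1 / 2) * (x/2)^(d-1) ≤ gegen ν ℓ (Real.cos x) * Real.sin x ^ (d-1) := by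
    intro x hx
    obtain ⟨hx0, hxT⟩ := hx
    have hℓL : (ℓ:ℝ) ≤ (L:ℝ) := by exact_mod_cast hℓ
    have hLδ : (L:ℝ) * δ ≤ (L:ℝ) := mul_le_of_le_one_right (by linarith) hδ1
    have hsm : (ℓ:ℝ) * x ≤ 1/2 := by
      have h1 : (ℓ:ℝ) * x ≤ (L:ℝ) * T :=
        mul_le_mul hℓL hxT hx0 (by linarith)
      have h2 : (L:ℝ) * T ≤ 1/2 := by
        rw [hTdef, ← mul_div_assoc, div_le_div_iff₀ (by positivity) (by norm_num)]
        nlinarith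
      linarith
    have h1 := gegen_lb hν ℓ hx0 hsm
    have hxs : x/2 ≤ Real.sin x := by
      rcases eq_or_lt_of_le hx0 with rfl | hx0'
      · simp
      · have hs := Real.sin_gt_sub_cube hx0'
        have hx2 : x^2 ≤ (1/4)^2 := by nlinarith
        have hx3 : x * x^2 ≤ x * (1/4)^2 :=
          mul_le_mul_of_nonneg_left hx2 (le_of_lt hx0')
        nlinarith
    have h2 : (x/2)^(d-1) ≤ Real.sin x ^ (d-1) :=
      pow_le_pow_left₀ (by positivity) hxs _
    have hb : 0 ≤ gegen ν ℓ (Real.cos x) := le_trans (by positivity) h1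
    exact mul_le_mul h1 h2 (by positivity) hb
  have hcont : Continuous (fun x => gegen ν ℓ (Real.cos x) * Real.sin x ^ (d-1)) := by
    have heq : (fun x => gegen ν ℓ (Real.cos x) * Real.sin x ^ (d-1))
        = fun x => (∑ k ∈ Finset.range (ℓ+1), acoef ν k * acoef ν (ℓ-k) *
            Real.cos (((ℓ:ℝ) - 2*k) * x)) * Real.sin x ^ (d-1) := by
      funext x; rw [gegen_cos]
    rw [heq]
    refine Continuous.mul ?_ (Real.continuous_sin.pow _)
    exact continuous_finset_sum _ fun k _ =>
      continuous_const.mul (Real.continuous_cos.comp (continuous_const.mul continuous_id))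
  have hint2 : IntervalIntegrable (fun x => gegen ν ℓ (Real.cos x) * Real.sin x ^ (d-1))
      MeasureTheory.volume 0 T := hcont.intervalIntegrable 0 T
  have hint1 : IntervalIntegrable (fun x => (gegen ν ℓ 1 / 2) * (x/2)^(d-1))
      MeasureTheory.volume 0 T := by
    apply Continuous.intervalIntegrable
    exact continuous_const.mul ((continuous_id.div_const 2).pow _)
  have hmono := intervalIntegral.integral_mono_on (le_of_lt hT0) hint1 hint2 hpt
  have hdm : d - 1 + 1 = d := by omega
  have hcomp : (∫ x in (0:ℝ)..T, (gegen ν ℓ 1 / 2) * (x/2)^(d-1))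
      = (gegen ν ℓ 1 / 2) * (1/2)^(d-1) * (T^d / d) := by
    have heq : (fun x : ℝ => (gegen ν ℓ 1 / 2) * (x/2)^(d-1))
        = fun x : ℝ => ((gegen ν ℓ 1 / 2) * (1/2)^(d-1)) * x^(d-1) := by
      funext x
      rw [div_pow, div_pow]
      ring
    have hc : ((d - 1 : ℕ):ℝ) = (d:ℝ) - 1 := by
      rw [Nat.cast_sub (by omega : 1 ≤ d)]; norm_num
    rw [heq, intervalIntegral.integral_const_mul, integral_pow, hdm,
      zero_pow (by omega : d ≠ 0), hc]
    have hne : (d:ℝ) - 1 + 1 ≠ 0 := by rw [sub_add_cancel]; positivity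
    field_simp
    try ring
  rw [hcomp] at hmono
  refine le_trans ?_ hmono
  have h4T : 4*T = 4*δ/(2*((L:ℝ)+1)) := by rw [hTdef]; ring
  have hδL4T : δ / (L:ℝ) ≤ 4 * T := by
    rw [h4T, div_le_div_iff₀ (by linarith) (by positivity)]
    nlinarith [mul_le_mul_of_nonneg_left hL1 (le_of_lt hδ)]
  have hpow : (δ / (L:ℝ))^d ≤ 4^d * T^d := by
    rw [← mul_pow]
    exact pow_le_pow_left₀ (by positivity) (by linarith) d
  calc 1/(2^d * (d:ℝ) * 4^d) * gegen ν ℓ 1 * (δ / L) ^ d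
      ≤ 1/(2^d * (d:ℝ) * 4^d) * gegen ν ℓ 1 * (4^d * T^d) := by
        apply mul_le_mul_of_nonneg_left hpow (by positivity)
    _ = gegen ν ℓ 1 / 2 * (1 / 2) ^ (d - 1) * (T ^ d / ↑d) := by
        have hhalf : ((1:ℝ)/2)^(d-1) = (1/2)^d * 2 := by
          have hh : ((1:ℝ)/2)^d = (1/2)^(d-1) * (1/2) := by
            conv_lhs => rw [← hdm]
            rw [pow_succ]
          rw [hh]; ring
        rw [hhalf]
        rw [one_div_pow]
        have h2 : (2:ℝ)^d ≠ 0 := by positivity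
        have h4 : (4:ℝ)^d ≠ 0 := by positivity
        have hdd : (d:ℝ) ≠ 0 := by positivity
        field_simp

end
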